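/- Let A be a Cohen-Macaulay Noetherian local ring and R a finite A-module with minimal free resolution 0 → F₂ →ψ F₁ →φ F₀ →p R → 0, with depth(Ann_A R, A) = 2. Let e ∈ R be the image under p of the generator of F₀ corresponding to the first row of φ, let φ' be φ with its first row erased and I' its zeroth Fitting ideal, and assume depth(I', A) ≥ 4. Set A_Y := A/Ann_A R. Then I' ⊆ Ann_A(R/A_Y e), and there exists an element d in the image I'·A_Y of I' in A_Y that is a nonzerodivisor on R (hence also on A_Y) and satisfies d·R ⊆ A_Y·e; i.e. R is a finite birational A_Y-module. -/

import Mathlib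

open Matrix IsLocalRing

def depthGE (A : Type) [CommRing A] (I : Ideal A) (M : Type) [AddCommGroup M] [Module A M]
    (n : ℕ) : Prop :=
  ∃ rs : List A, rs.length = n ∧ (∀ x ∈ rs, x ∈ I) ∧ RingTheory.Sequence.IsRegular M rs

def depthEq (A : Type) [CommRing A] (I : Ideal A) (M : Type) [AddCommGroup M] [Module A M]
    (n : ℕ) : Prop :=
  depthGE A I M n ∧ ¬ depthGE A I M (n + 1)

def IsCMLocalRing (A : Type) [CommRing A] [IsLocalRing A] : Prop :=
  ∃ rs : List A, (∀ x ∈ rs, x ∈ maximalIdeal A) ∧ RingTheory.Sequence.IsRegular A rs ∧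
    (rs.length : WithBot ℕ∞) = ringKrullDim A

def IsFreeRes₂ (A : Type) [CommRing A] {R : Type} [AddCommGroup R] [Module A R]
    {ι₀ ι₁ ι₂ : Type} [Fintype ι₀] [Fintype ι₁] [Fintype ι₂]
    (φ : Matrix ι₀ ι₁ A) (ψ : Matrix ι₁ ι₂ A) (p : (ι₀ → A) →ₗ[A] R) : Prop :=
  Function.Surjective p ∧ LinearMap.ker p = LinearMap.range φ.mulVecLin ∧
    LinearMap.ker φ.mulVecLin = LinearMap.range ψ.mulVecLin ∧
    LinearMap.ker ψ.mulVecLin = ⊥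

def maxMinors (A : Type) [CommRing A] {m : ℕ} {J : Type} [Fintype J] [DecidableEq J]
    (M : Matrix (Fin m) J A) : Ideal A :=
  Ideal.span {x | ∃ c : Fin m → J, Function.Injective c ∧ x = (M.submatrix id c).det}

/-! ### Auxiliary lemmas -/

section Helpers
variable {A : Type} [CommRing A] {M : Type} [AddCommGroup M] [Module A M]

lemma isSMulRegular_of_smul_eq_zero {d : A} (h : ∀ m : M, d • m = 0 → m = 0) :
    IsSMulRegular M d := by
  intro u v huv
  have := h (u - v) (by rw [smul_sub]; rw [sub_eq_zero]; exact huv)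
  exact sub_eq_zero.mp this

lemma smul_eq_zero_of_isSMulRegular {d : A} (h : IsSMulRegular M d) :
    ∀ m : M, d • m = 0 → m = 0 := by
  intro m hm
  apply h
  show d • m = d • 0
  rw [hm, smul_zero]

/-- From regularity on a quotient `A ⧸ N` deduce the colon property. -/
lemma mul_mem_of_isSMulRegular_quot {N : Submodule A A} {d : A}
    (h : IsSMulRegular (A ⧸ N) d) : ∀ a : A, d * a ∈ N → a ∈ N := by
  intro a ha
  have : d • (Submodule.Quotient.mk a : A ⧸ N) = 0 := by
    rw [← Submodule.Quotient.mk_smul, smul_eq_mul, Submodule.Quotient.mk_eq_zero]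
    exact ha
  have := smul_eq_zero_of_isSMulRegular h _ this
  rwa [Submodule.Quotient.mk_eq_zero] at this

end Helpers

section Chase
variable {A : Type} [CommRing A] {R : Type} [AddCommGroup R] [Module A R]

lemma chase {n₀ n₁ n₂ : ℕ}
    (φ : Matrix (Fin n₀) (Fin n₁) A) (ψ : Matrix (Fin n₁) (Fin n₂) A)
    (p : (Fin n₀ → A) →ₗ[A] R)
    (hsurj : Function.Surjective p)
    (hker : LinearMap.ker p = LinearMap.range φ.mulVecLin)
    (hmid : LinearMap.ker φ.mulVecLin = LinearMap.range ψ.mulVecLin)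
    (hinj : LinearMap.ker ψ.mulVecLin = ⊥)
    {x y z : A}
    (hx : ∀ a : A, x * a = 0 → a = 0)
    (hy : ∀ a : A, y * a ∈ Ideal.span {x} → a ∈ Ideal.span {x})
    (hz : ∀ a : A, z * a ∈ Ideal.span ({x, y} : Set A) → a ∈ Ideal.span ({x, y} : Set A))
    (r : R) (hxr : x • r = 0) (hyr : y • r = 0) (hzr : z • r = 0) : r = 0 := by
  obtain ⟨v, rfl⟩ := hsurj r
  have hmem : ∀ t : A, t • p v = 0 → ∃ a, φ.mulVecLin a = t • v := by
    intro t ht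
    have : t • v ∈ LinearMap.ker p := by
      rw [LinearMap.mem_ker, LinearMap.map_smul, ht]
    rw [hker] at this
    exact this
  obtain ⟨a, ha⟩ := hmem x hxr
  obtain ⟨b, hb⟩ := hmem y hyr
  obtain ⟨c, hc⟩ := hmem z hzr
  have hmem₂ : ∀ w : Fin n₁ → A, φ.mulVecLin w = 0 → ∃ s, ψ.mulVecLin s = w := by
    intro w hw
    have : w ∈ LinearMap.ker φ.mulVecLin := hw
    rw [hmid] at this
    exact this
  obtain ⟨s₁, hs₁⟩ := hmem₂ (y • a - x • b) (by
    rw [map_sub, LinearMap.map_smul, LinearMap.map_smul, ha, hb, smul_comm]; exact sub_self _)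
  obtain ⟨s₂, hs₂⟩ := hmem₂ (z • a - x • c) (by
    rw [map_sub, LinearMap.map_smul, LinearMap.map_smul, ha, hc, smul_comm]; exact sub_self _)
  obtain ⟨s₃, hs₃⟩ := hmem₂ (z • b - y • c) (by
    rw [map_sub, LinearMap.map_smul, LinearMap.map_smul, hb, hc, smul_comm]; exact sub_self _)
  have key : z • s₁ - y • s₂ + x • s₃ = 0 := by
    have : z • s₁ - y • s₂ + x • s₃ ∈ LinearMap.ker ψ.mulVecLin := by
      rw [LinearMap.mem_ker, map_add, map_sub, LinearMap.map_smul, LinearMap.map_smul,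
        LinearMap.map_smul, hs₁, hs₂, hs₃]
      funext i
      simp only [Pi.add_apply, Pi.sub_apply, Pi.smul_apply, Pi.zero_apply, smul_eq_mul]
      ring
    rwa [hinj, Submodule.mem_bot] at this
  have hs₁mem : ∀ i, s₁ i ∈ Ideal.span ({x, y} : Set A) := by
    intro i
    apply hz
    have hk := congrFun key i
    simp only [Pi.add_apply, Pi.sub_apply, Pi.smul_apply, Pi.zero_apply, smul_eq_mul] at hk
    have : z * s₁ i = y * s₂ i - x * s₃ i := by linear_combination hk
    rw [this, Ideal.mem_span_pair]
    exact ⟨-(s₃ i), s₂ i, by ring⟩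
  choose α β hαβ using fun i => Ideal.mem_span_pair.mp (hs₁mem i)
  have hs₁eq : s₁ = x • α + y • β := by
    funext i
    simp only [Pi.add_apply, Pi.smul_apply, smul_eq_mul]
    linear_combination (hαβ i).symm
  have hs₁' : x • ψ.mulVecLin α + y • ψ.mulVecLin β = y • a - x • b := by
    rw [← LinearMap.map_smul, ← LinearMap.map_smul, ← map_add, ← hs₁eq]; exact hs₁
  have haimem : ∀ i, a i - ψ.mulVecLin β i ∈ Ideal.span ({x} : Set A) := by
    intro i
    apply hy
    have h' := congrFun hs₁' i
    simp only [Pi.add_apply, Pi.sub_apply, Pi.smul_apply, smul_eq_mul] at h'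
    have : y * (a i - ψ.mulVecLin β i) = x * (b i + ψ.mulVecLin α i) := by
      linear_combination -h'
    rw [this]
    exact Ideal.mem_span_singleton'.mpr ⟨b i + ψ.mulVecLin α i, by ring⟩
  choose γ hγ using fun i => Ideal.mem_span_singleton'.mp (haimem i)
  have haeq : a = ψ.mulVecLin β + x • γ := by
    funext i
    simp only [Pi.add_apply, Pi.smul_apply, smul_eq_mul]
    linear_combination (hγ i).symm
  have hphipsi : φ.mulVecLin (ψ.mulVecLin β) = 0 := by
    have : ψ.mulVecLin β ∈ LinearMap.range ψ.mulVecLin := ⟨β, rfl⟩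
    rw [← hmid, LinearMap.mem_ker] at this
    exact this
  have hxv : x • v = x • φ.mulVecLin γ := by
    rw [← ha, haeq, map_add, LinearMap.map_smul, hphipsi, zero_add]
  have hveq : v = φ.mulVecLin γ := by
    funext i
    have h' := congrFun hxv i
    simp only [Pi.smul_apply, smul_eq_mul] at h'
    have h0 : x * (v i - φ.mulVecLin γ i) = 0 := by linear_combination h'
    have := hx _ h0
    linear_combination this
  rw [hveq]
  have : φ.mulVecLin γ ∈ LinearMap.ker p := by
    rw [hker]; exact ⟨γ, rfl⟩
  exact LinearMap.mem_ker.mp this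

end Chase

section Ass
variable {A : Type} [CommRing A] {M : Type} [AddCommGroup M] [Module A M]

lemma ann_smul_aux {p : Ideal A} (hp : p.IsPrime) {m : M}
    (hm : ∀ b : A, b ∈ p ↔ b • m = 0) {a : A} (ha : a • m ≠ 0) (b : A) :
    b ∈ p ↔ b • (a • m) = 0 := by
  rw [smul_smul]
  constructor
  · intro h
    rw [← hm]
    exact p.mul_mem_right a h
  · intro h
    rcases hp.mem_or_mem ((hm _).mpr h) with h' | h'
    · exact h'
    · exact absurd ((hm a).mp h') ha

lemma associatedPrimes_subset_union [IsNoetherianRing A] (S : Submodule A M) :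
    associatedPrimes A M ⊆ associatedPrimes A S ∪ associatedPrimes A (M ⧸ S) := by
  rintro p hpa
  obtain ⟨hp, x, hx⟩ := isAssociatedPrime_iff.mp hpa
  have hm : ∀ b : A, b ∈ p ↔ b • x = 0 := by
    intro b
    rw [hx, Submodule.mem_colon_singleton, Submodule.mem_bot]
  by_cases hcase : ∀ a : A, a • x ∈ S → a • x = 0
  · right
    refine (isAssociatedPrime_iff (M := M ⧸ S)).mpr ⟨hp, Submodule.Quotient.mk x, ?_⟩
    ext b
    rw [Submodule.mem_colon_singleton, Submodule.mem_bot, ← Submodule.Quotient.mk_smul,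
      Submodule.Quotient.mk_eq_zero]
    constructor
    · intro h
      rw [(hm b).mp h]
      exact S.zero_mem
    · intro h
      exact (hm b).mpr (hcase b h)
  · left
    push_neg at hcase
    obtain ⟨a, haS, hane⟩ := hcase
    refine (isAssociatedPrime_iff (M := S)).mpr ⟨hp, ⟨a • x, haS⟩, ?_⟩
    ext b
    rw [Submodule.mem_colon_singleton, Submodule.mem_bot]
    rw [ann_smul_aux hp hm hane b]
    constructor
    · intro h
      exact Subtype.ext (by simpa using h)
    · intro h
      simpa using congrArg Subtype.val h

lemma associatedPrimes_span_singleton_subset [IsNoetherianRing A] {p : Ideal A} (hp : p.IsPrime) {x : M}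
    (hm : ∀ b : A, b ∈ p ↔ b • x = 0) :
    associatedPrimes A (Submodule.span A ({x} : Set M)) ⊆ {p} := by
  rintro q hqa
  obtain ⟨hq, s, hs⟩ := isAssociatedPrime_iff.mp hqa
  obtain ⟨a, ha⟩ := Submodule.mem_span_singleton.mp s.2
  have hsne : (s : M) ≠ 0 := by
    intro h
    have : q = ⊤ := by
      rw [hs, Ideal.eq_top_iff_one, Submodule.mem_colon_singleton, Submodule.mem_bot, one_smul]
      exact Subtype.ext h
    exact hq.ne_top this
  have hax : a • x ≠ 0 := by rw [ha]; exact hsne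
  have : ∀ b : A, b ∈ q ↔ b ∈ p := by
    intro b
    rw [hs, Submodule.mem_colon_singleton, Submodule.mem_bot, ann_smul_aux hp hm hax b]
    constructor
    · intro h
      have h2 : b • (s : M) = 0 := by simpa using congrArg Subtype.val h
      rw [← ha] at h2
      simpa using h2
    · intro h
      refine Subtype.ext ?_
      show b • (s : M) = 0
      rw [← ha]
      simpa using h
  simp only [Set.mem_singleton_iff]
  exact Ideal.ext this

lemma associatedPrimes_finite (A : Type) [CommRing A] [IsNoetherianRing A]
    (M : Type) [AddCommGroup M] [Module A M] [Module.Finite A M] :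
    (associatedPrimes A M).Finite := by
  have : IsNoetherian A M := inferInstance
  have main : ∀ N : Submodule A M, (associatedPrimes A (M ⧸ N)).Finite := by
    intro N
    induction N using IsNoetherian.induction with
    | hgt N IH =>
      by_cases hN : N = ⊤
      · subst hN
        haveI : Subsingleton (M ⧸ (⊤ : Submodule A M)) :=
          Submodule.Quotient.subsingleton_iff.mpr rfl
        rw [associatedPrimes.eq_empty_of_subsingleton]
        exact Set.finite_empty
      · haveI : Nontrivial (M ⧸ N) :=
          Submodule.Quotient.nontrivial_iff.mpr hN
        obtain ⟨p, hp⟩ := associatedPrimes.nonempty A (M ⧸ N)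
        obtain ⟨hprime, xb, hxb⟩ := isAssociatedPrime_iff.mp hp
        have hm : ∀ b : A, b ∈ p ↔ b • xb = 0 := by
          intro b
          rw [hxb, Submodule.mem_colon_singleton, Submodule.mem_bot]
        have hxbne : xb ≠ 0 := by
          intro h
          apply hprime.ne_top
          rw [Ideal.eq_top_iff_one, hm, h, smul_zero]
        obtain ⟨x, rfl⟩ := Submodule.Quotient.mk_surjective N xb
        have hxN : x ∉ N := fun h => hxbne ((Submodule.Quotient.mk_eq_zero N).mpr h)
        set N' : Submodule A M := N ⊔ Submodule.span A ({x} : Set M) with hN'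
        have hlt : N < N' := by
          rw [lt_iff_le_and_ne]
          refine ⟨le_sup_left, ?_⟩
          intro h
          apply hxN
          rw [h]
          exact Submodule.mem_sup_right (Submodule.mem_span_singleton_self x)
        have hsub := associatedPrimes_subset_union
          (Submodule.span A ({Submodule.Quotient.mk x} : Set (M ⧸ N)))
        have hquot : associatedPrimes A
            ((M ⧸ N) ⧸ Submodule.span A ({Submodule.Quotient.mk x} : Set (M ⧸ N))) =
            associatedPrimes A (M ⧸ N') := by
          have hmap : Submodule.span A ({Submodule.Quotient.mk x} : Set (M ⧸ N)) =
              Submodule.map N.mkQ (Submodule.span A ({x} : Set M)) := by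
            rw [Submodule.map_span, Set.image_singleton]
            rfl
          rw [hmap]
          exact LinearEquiv.AssociatedPrimes.eq
            (Submodule.quotientQuotientEquivQuotientSup N (Submodule.span A ({x} : Set M)))
        apply Set.Finite.subset (Set.Finite.union (Set.finite_singleton p) (IH N' hlt))
        intro q hq
        rcases hsub hq with h | h
        · exact Or.inl (associatedPrimes_span_singleton_subset hprime hm h)
        · right
          rw [← hquot]
          exact h
  have := main ⊥
  have heq : associatedPrimes A (M ⧸ (⊥ : Submodule A M)) = associatedPrimes A M :=
    LinearEquiv.AssociatedPrimes.eq (Submodule.quotEquivOfEqBot ⊥ rfl)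
  rwa [heq] at this

lemma exists_isSMulRegular_of_forall_not_le (A : Type) [CommRing A] [IsNoetherianRing A]
    (M : Type) [AddCommGroup M] [Module A M] [Module.Finite A M] (I : Ideal A)
    (h : ∀ p ∈ associatedPrimes A M, ¬ I ≤ p) :
    ∃ d ∈ I, IsSMulRegular M d := by
  classical
  by_contra hc
  push_neg at hc
  have hfin := associatedPrimes_finite A M
  set T : Finset (Ideal A) := hfin.toFinset with hT
  have hsub : (I : Set A) ⊆ ⋃ p ∈ (↑T : Set (Ideal A)), ((id p : Ideal A) : Set A) := by
    intro d hd
    obtain ⟨u, v, huv, hne⟩ := Function.not_injective_iff.mp (hc d hd)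
    have hm : u - v ≠ 0 := sub_ne_zero.mpr hne
    have hdm : d • (u - v) = 0 := by rw [smul_sub, huv, sub_self]
    obtain ⟨P, hP, hle⟩ := exists_le_isAssociatedPrime_of_isNoetherianRing A (u - v) hm
    have hdP : d ∈ P :=
      hle (by rw [Submodule.mem_colon_singleton, Submodule.mem_bot]; exact hdm)
    exact Set.mem_biUnion (hfin.mem_toFinset.mpr hP) hdP
  have hprimes : ∀ p ∈ T, p ≠ (⊥ : Ideal A) → p ≠ (⊥ : Ideal A) → (id p : Ideal A).IsPrime :=
    fun p hp _ _ => (hfin.mem_toFinset.mp hp).isPrime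
  obtain ⟨p, hpT, hIp⟩ := (Ideal.subset_union_prime (s := T) (f := id) ⊥ ⊥ hprimes).mp hsub
  exact h p (hfin.mem_toFinset.mp hpT) hIp

end Ass

section Fitting
variable {A : Type} [CommRing A] {R : Type} [AddCommGroup R] [Module A R]

lemma p_apply_eq_sum {n : ℕ} (p : (Fin n → A) →ₗ[A] R) (v : Fin n → A) :
    p v = ∑ i, v i • p (Pi.single i 1) := by
  have hsingle : ∀ i, Pi.single i (v i) = v i • (Pi.single i (1 : A) : Fin n → A) := by
    intro i
    funext j
    simp [Pi.single_apply]
  conv_lhs => rw [← Finset.univ_sum_single v]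
  rw [map_sum]
  apply Finset.sum_congr rfl
  intro i _
  rw [hsingle i, LinearMap.map_smul]

lemma maxMinors_le_annihilator {n₀ n₁ : ℕ}
    (φ : Matrix (Fin (n₀ + 1)) (Fin n₁) A) (p : (Fin (n₀ + 1) → A) →ₗ[A] R)
    (hsurj : Function.Surjective p)
    (hker : LinearMap.range φ.mulVecLin ≤ LinearMap.ker p) :
    maxMinors A (φ.submatrix Fin.succ id) ≤
      Module.annihilator A (R ⧸ Submodule.span A {p (Pi.single 0 1)}) := by
  set e := p (Pi.single 0 1) with he
  set S := Submodule.span A ({e} : Set R) with hS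
  set q : R →ₗ[A] R ⧸ S := S.mkQ with hq
  have hq0 : q e = 0 := by
    rw [hq, Submodule.mkQ_apply, Submodule.Quotient.mk_eq_zero]
    exact Submodule.mem_span_singleton_self e
  set G : Fin n₀ → R ⧸ S := fun i => q (p (Pi.single i.succ 1)) with hG
  apply Ideal.span_le.mpr
  rintro x ⟨c, hc, rfl⟩
  rw [SetLike.mem_coe, Module.mem_annihilator]
  set B : Matrix (Fin n₀) (Fin n₀) A := ((φ.submatrix Fin.succ id).submatrix id c)ᵀ with hB
  have hBa : ∀ k i, B k i = φ i.succ (c k) := fun k i => rfl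
  have hrel : ∀ k : Fin n₀, ∑ i, B k i • G i = 0 := by
    intro k
    have hcol : p (φ.mulVec (Pi.single (c k) 1)) = 0 :=
      hker ⟨Pi.single (c k) 1, rfl⟩
    have hmv : φ.mulVec (Pi.single (c k) 1) = fun i => φ i (c k) * 1 := by
      funext i; simp [Matrix.mulVec_single]
    rw [hmv] at hcol
    have h2 : q (p (fun i => φ i (c k) * 1)) = 0 := by rw [hcol, map_zero]
    rw [p_apply_eq_sum, map_sum] at h2
    simp only [mul_one] at h2
    have h3 : ∑ i, φ i (c k) • q (p (Pi.single i 1)) = 0 := by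
      refine Eq.trans ?_ h2
      apply Finset.sum_congr rfl
      intro i _
      rw [LinearMap.map_smul]
    rw [Fin.sum_univ_succ] at h3
    rw [← he, hq0, smul_zero, zero_add] at h3
    exact h3
  have hadj : ∀ i, B.det • G i = 0 := by
    intro i
    have h1 : B.det • G i = ∑ l, ((B.det • (1 : Matrix (Fin n₀) (Fin n₀) A)) i l) • G l := by
      simp only [Matrix.smul_apply, Matrix.one_apply, smul_eq_mul, mul_ite, mul_one, mul_zero,
        ite_smul, zero_smul]
      rw [Finset.sum_ite_eq]
      simp
    rw [h1, ← Matrix.adjugate_mul B]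
    calc ∑ l, ((B.adjugate * B) i l) • G l
        = ∑ l, ∑ k, (B.adjugate i k * B k l) • G l := by
          apply Finset.sum_congr rfl
          intro l _
          rw [Matrix.mul_apply, Finset.sum_smul]
      _ = ∑ k, B.adjugate i k • ∑ l, B k l • G l := by
          rw [Finset.sum_comm]
          apply Finset.sum_congr rfl
          intro k _
          rw [Finset.smul_sum]
          apply Finset.sum_congr rfl
          intro l _
          rw [mul_smul]
      _ = 0 := by simp [hrel]
  have hdet : ((φ.submatrix Fin.succ id).submatrix id c).det = B.det := by
    rw [hB, Matrix.det_transpose]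
  rw [hdet]
  intro m
  obtain ⟨r, rfl⟩ := Submodule.mkQ_surjective S m
  obtain ⟨v, rfl⟩ := hsurj r
  have : (S.mkQ) (p v) = q (p v) := rfl
  rw [this, p_apply_eq_sum, map_sum]
  rw [Finset.smul_sum]
  apply Finset.sum_eq_zero
  intro i _
  rw [LinearMap.map_smul]
  induction i using Fin.cases with
  | zero => rw [← he, hq0, smul_zero, smul_zero]
  | succ j => rw [smul_comm, hadj j, smul_zero]

end Fitting

/-- **(From the proof of Theorem 1.1: `R` is a finite birational `A_Y`-module.)**
With `e := p(first generator)`, the matrix `φ'` (`φ` with first row erased) presents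
`R/A_Y e`, so `I' ⊆ Ann_A (R/A_Y e)`; and since `depth(I', R) ≥ 2` there is `d ∈ I'` whose
action on `R` (and hence its image in `A_Y = A ⧸ Ann_A R`) is a nonzerodivisor, while
`d · R ⊆ A_Y · e` (note that the `A_Y`-submodule generated by `e` coincides with the
`A`-submodule generated by `e`). -/
theorem finite_birational_module
    (A : Type) [CommRing A] [IsLocalRing A] [IsNoetherianRing A] (hCM : IsCMLocalRing A)
    (R : Type) [AddCommGroup R] [Module A R] [Module.Finite A R]
    (n₀ n₁ n₂ : ℕ)
    (φ : Matrix (Fin (n₀ + 1)) (Fin n₁) A) (ψ : Matrix (Fin n₁) (Fin n₂) A)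
    (p : (Fin (n₀ + 1) → A) →ₗ[A] R)
    (hres : IsFreeRes₂ A φ ψ p)
    (hmin : (∀ i j, φ i j ∈ maximalIdeal A) ∧ ∀ i j, ψ i j ∈ maximalIdeal A)
    (hdepthAnn : depthEq A (Module.annihilator A R) A 2)
    (hheart : depthGE A (maxMinors A (φ.submatrix Fin.succ id)) A 4) :
    maxMinors A (φ.submatrix Fin.succ id) ≤
      Module.annihilator A (R ⧸ Submodule.span A {p (Pi.single 0 1)}) ∧
    ∃ d ∈ maxMinors A (φ.submatrix Fin.succ id),
      IsSMulRegular R d ∧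
      IsSMulRegular (A ⧸ Module.annihilator A R)
        ((Ideal.Quotient.mk (Module.annihilator A R)) d) ∧
      ∀ x : R, d • x ∈ Submodule.span A {p (Pi.single 0 1)} := by
  obtain ⟨hsurj, hker, hmid, hinj⟩ := hres
  set I' := maxMinors A (φ.submatrix Fin.succ id) with hI'
  have part1 : I' ≤ Module.annihilator A (R ⧸ Submodule.span A {p (Pi.single 0 1)}) :=
    maxMinors_le_annihilator φ p hsurj (le_of_eq hker.symm)
  refine ⟨part1, ?_⟩
  -- extract a regular sequence of length (at least) 3 in I'
  obtain ⟨rs, hlen, hmemI, hreg⟩ := hheart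
  obtain ⟨x, y, z, w, rfl⟩ : ∃ x y z w, rs = [x, y, z, w] := by
    rcases rs with _ | ⟨x, rs⟩; · simp at hlen
    rcases rs with _ | ⟨y, rs⟩; · simp at hlen
    rcases rs with _ | ⟨z, rs⟩; · simp at hlen
    rcases rs with _ | ⟨w, rs⟩; · simp at hlen
    rcases rs with _ | ⟨u, rs⟩
    · exact ⟨x, y, z, w, rfl⟩
    · simp at hlen
  have hwreg := hreg.toIsWeaklyRegular
  have h0 := mul_mem_of_isSMulRegular_quot (hwreg.regular_mod_prev 0 (by norm_num))
  have h1 := mul_mem_of_isSMulRegular_quot (hwreg.regular_mod_prev 1 (by norm_num))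
  have h2 := mul_mem_of_isSMulRegular_quot (hwreg.regular_mod_prev 2 (by norm_num))
  have hN0 : (Ideal.ofList ([x, y, z, w].take 0) • ⊤ : Submodule A A) = ⊥ := by simp
  have hN1 : (Ideal.ofList ([x, y, z, w].take 1) • ⊤ : Submodule A A) =
      Ideal.span ({x} : Set A) := by
    simp only [List.take, Ideal.ofList_cons, Ideal.ofList_nil, sup_bot_eq, smul_eq_mul,
      Ideal.mul_top]
  have hN2 : (Ideal.ofList ([x, y, z, w].take 2) • ⊤ : Submodule A A) =
      Ideal.span ({x, y} : Set A) := by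
    simp only [List.take, Ideal.ofList_cons, Ideal.ofList_nil, sup_bot_eq, smul_eq_mul,
      Ideal.mul_top]
    rw [Ideal.span_insert]
  rw [hN0] at h0
  rw [hN1] at h1
  rw [hN2] at h2
  have e0 : ([x, y, z, w][0]'(by norm_num)) = x := rfl
  have e1 : ([x, y, z, w][1]'(by norm_num)) = y := rfl
  have e2 : ([x, y, z, w][2]'(by norm_num)) = z := rfl
  rw [e0] at h0
  rw [e1] at h1
  rw [e2] at h2
  have hx : ∀ a : A, x * a = 0 → a = 0 := by
    intro a ha
    have := h0 a (by rw [ha]; exact Submodule.zero_mem _)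
    simpa using this
  have hy : ∀ a : A, y * a ∈ Ideal.span ({x} : Set A) → a ∈ Ideal.span ({x} : Set A) := h1
  have hz : ∀ a : A, z * a ∈ Ideal.span ({x, y} : Set A) →
      a ∈ Ideal.span ({x, y} : Set A) := h2
  -- existence of a regular element in I'
  have hnotin : ∀ P ∈ associatedPrimes A R, ¬ I' ≤ P := by
    rintro P hPa hle
    obtain ⟨hPprime, m, hPm⟩ := isAssociatedPrime_iff.mp hPa
    have hmem : ∀ b : A, b ∈ P → b • m = 0 := by
      intro b hb
      rw [hPm, Submodule.mem_colon_singleton, Submodule.mem_bot] at hb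
      exact hb
    have hm0 : m ≠ 0 := by
      intro h
      apply hPprime.ne_top
      rw [hPm, h, Ideal.eq_top_iff_one, Submodule.mem_colon_singleton, smul_zero]
      exact Submodule.zero_mem _
    apply hm0
    exact chase φ ψ p hsurj hker hmid hinj hx hy hz m
      (hmem x (hle (hmemI x (by simp))))
      (hmem y (hle (hmemI y (by simp))))
      (hmem z (hle (hmemI z (by simp))))
  obtain ⟨d, hdI, hdreg⟩ := exists_isSMulRegular_of_forall_not_le A R I' hnotin
  refine ⟨d, hdI, hdreg, ?_, ?_⟩
  · -- regular on A ⧸ Ann R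
    have hzero : ∀ qq : A ⧸ Module.annihilator A R,
        (Ideal.Quotient.mk (Module.annihilator A R) d) * qq = 0 → qq = 0 := by
      intro qq hqq
      obtain ⟨a, rfl⟩ := Ideal.Quotient.mk_surjective qq
      have hda : d * a ∈ Module.annihilator A R := by
        rw [← Ideal.Quotient.eq_zero_iff_mem, _root_.map_mul]
        exact hqq
      rw [Ideal.Quotient.eq_zero_iff_mem, Module.mem_annihilator]
      intro r
      apply smul_eq_zero_of_isSMulRegular hdreg
      rw [smul_smul]
      exact Module.mem_annihilator.mp hda r
    intro u v huv
    have h' : (Ideal.Quotient.mk (Module.annihilator A R) d) * (u - v) = 0 := by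
      rw [mul_sub, sub_eq_zero]
      simpa [smul_eq_mul] using huv
    exact sub_eq_zero.mp (hzero _ h')
  · -- d • x ∈ span {e}
    intro r
    have := Module.mem_annihilator.mp (part1 hdI) (Submodule.Quotient.mk r)
    rwa [← Submodule.Quotient.mk_smul, Submodule.Quotient.mk_eq_zero] at this
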